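/- There exists a universal constant C > 0 such that for all a ≥ 0 and all real k, |∫₀^∞ (e^{−iky} − 1) / (y^{3/2} + a^{3/2}) dy| ≤ C |k|^{1/2}. -/

import Mathlib

open MeasureTheory Set Real

/-- Uniform symbol bound: there is a universal `C > 0` such that for all `a ≥ 0`
and real `k`, `|∫₀^∞ (e^{−iky} − 1) / (y^{3/2} + a^{3/2}) dy| ≤ C |k|^{1/2}`. -/
theorem stmt10 :
    ∃ C > 0, ∀ a : ℝ, 0 ≤ a → ∀ k : ℝ,
      ‖∫ y in Set.Ioi (0:ℝ),
          (Complex.exp (-(Complex.I * (k:ℂ) * (y:ℂ))) - 1)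
            / ((y ^ ((3:ℝ)/2) + a ^ ((3:ℝ)/2) : ℝ) : ℂ)‖
        ≤ C * |k| ^ ((1:ℝ)/2) := by
  refine ⟨8, by norm_num, ?_⟩
  intro a ha k
  rcases eq_or_ne k 0 with rfl | hk
  · simp [Complex.exp_zero]
  set K := |k| with hKdef
  have hK : 0 < K := abs_pos.mpr hk
  set T : ℝ := K⁻¹ with hTdef
  have hT : 0 < T := inv_pos.mpr hK
  set h : ℝ → ℝ := fun y => if y ≤ T then 2*K*y^(-(1/2) : ℝ) else 2*y^(-(3/2) : ℝ) with hhdef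
  -- integrability on pieces
  have hIoc : IntegrableOn (fun y : ℝ => 2*K*y^(-(1/2) : ℝ)) (Ioc 0 T) := by
    apply Integrable.const_mul
    have := (intervalIntegral.intervalIntegrable_rpow' (a := 0) (b := T)
      (r := -(1/2)) (by norm_num))
    rw [intervalIntegrable_iff_integrableOn_Ioc_of_le hT.le] at this
    exact this
  have hIoi : IntegrableOn (fun y : ℝ => 2*y^(-(3/2) : ℝ)) (Ioi T) :=
    (integrableOn_Ioi_rpow_of_lt (by norm_num) hT).const_mul 2
  have hhIoc : IntegrableOn h (Ioc 0 T) := by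
    apply hIoc.congr_fun ?_ measurableSet_Ioc
    intro y hy; simp [hhdef, hy.2]
  have hhIoi : IntegrableOn h (Ioi T) := by
    apply hIoi.congr_fun ?_ measurableSet_Ioi
    intro y hy; simp [hhdef, not_le.mpr (mem_Ioi.mp hy)]
  have hunion : Ioc 0 T ∪ Ioi T = Ioi (0:ℝ) := Ioc_union_Ioi_eq_Ioi hT.le
  have hhInt : IntegrableOn h (Ioi 0) := by
    rw [← hunion]; exact hhIoc.union hhIoi
  have e2 : K * K ^ (-(1/2):ℝ) = K ^ ((1:ℝ)/2) := by
    nth_rewrite 1 [← Real.rpow_one K]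
    rw [← Real.rpow_add hK]; norm_num
  -- value of ∫ h on first piece
  have hval1 : ∫ y in Ioc 0 T, h y = 4 * K ^ ((1:ℝ)/2) := by
    rw [setIntegral_congr_fun measurableSet_Ioc (g := fun y : ℝ => 2*K*y^(-(1/2) : ℝ))
      (fun y hy => by simp [hhdef, hy.2])]
    rw [integral_const_mul, ← intervalIntegral.integral_of_le hT.le,
      integral_rpow (Or.inl (by norm_num))]
    rw [show (-(1/2) : ℝ) + 1 = 1/2 by norm_num]
    rw [Real.zero_rpow (by norm_num), hTdef, ← Real.rpow_neg_one K,
      ← Real.rpow_mul hK.le]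
    rw [show ((-1:ℝ)*(1/2)) = (-(1/2):ℝ) by norm_num, sub_zero]
    have e3 : (K ^ (-(1/2):ℝ)) / (1/2) = 2 * K ^ (-(1/2):ℝ) := by ring
    rw [e3]
    linear_combination (4:ℝ) * e2
  have hval2 : ∫ y in Ioi T, h y = 4 * K ^ ((1:ℝ)/2) := by
    rw [setIntegral_congr_fun measurableSet_Ioi (g := fun y : ℝ => 2*y^(-(3/2) : ℝ))
      (fun y hy => by simp [hhdef, not_le.mpr (mem_Ioi.mp hy)])]
    rw [integral_const_mul, integral_Ioi_rpow_of_lt (by norm_num) hT]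
    rw [show (-(3/2) : ℝ) + 1 = -(1/2) by norm_num]
    rw [hTdef, ← Real.rpow_neg_one K, ← Real.rpow_mul hK.le]
    rw [show ((-1:ℝ)*(-(1/2))) = ((1:ℝ)/2) by norm_num]
    ring
  have htot : ∫ y in Ioi (0:ℝ), h y = 8 * K ^ ((1:ℝ)/2) := by
    rw [← hunion, setIntegral_union (Ioc_disjoint_Ioi le_rfl) measurableSet_Ioi hhIoc hhIoi,
      hval1, hval2]
    ring
  -- pointwise bound
  have hbound : ∀ y ∈ Ioi (0:ℝ),
      ‖(Complex.exp (-(Complex.I * (k:ℂ) * (y:ℂ))) - 1)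
        / ((y ^ ((3:ℝ)/2) + a ^ ((3:ℝ)/2) : ℝ) : ℂ)‖ ≤ h y := by
    intro y hy
    have hy0 : 0 < y := hy
    have hyp : (0:ℝ) < y ^ ((3:ℝ)/2) := Real.rpow_pos_of_pos hy0 _
    have hden : (0:ℝ) < y ^ ((3:ℝ)/2) + a ^ ((3:ℝ)/2) := by positivity
    have hdle : y ^ ((3:ℝ)/2) ≤ y ^ ((3:ℝ)/2) + a ^ ((3:ℝ)/2) :=
      le_add_of_nonneg_right (Real.rpow_nonneg ha _)
    have hznorm : ‖-(Complex.I * (k:ℂ) * (y:ℂ))‖ = K * y := by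
      simp [map_mul, Complex.norm_I, Complex.norm_real,
        abs_of_pos hy0, hKdef]
    rw [norm_div, Complex.norm_real, Real.norm_eq_abs, abs_of_pos hden]
    by_cases hyT : y ≤ T
    · have hz1 : ‖-(Complex.I * (k:ℂ) * (y:ℂ))‖ ≤ 1 := by
        rw [hznorm]
        calc K * y ≤ K * T := by nlinarith
          _ = 1 := by rw [hTdef]; field_simp
      have hnum : ‖Complex.exp (-(Complex.I * (k:ℂ) * (y:ℂ))) - 1‖ ≤ 2 * (K * y) := by
        have := Complex.norm_exp_sub_one_le (x := -(Complex.I * (k:ℂ) * (y:ℂ)))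
          (by exact hz1)
        rw [hznorm] at this
        exact this
      have : ‖Complex.exp (-(Complex.I * (k:ℂ) * (y:ℂ))) - 1‖
          / (y ^ ((3:ℝ)/2) + a ^ ((3:ℝ)/2)) ≤ (2 * (K * y)) / y ^ ((3:ℝ)/2) :=
        div_le_div₀ (by positivity) hnum hyp hdle
      refine this.trans (le_of_eq ?_)
      rw [hhdef]; simp only [if_pos hyT]
      rw [mul_assoc, mul_div_assoc]
      congr 1
      rw [mul_div_assoc]
      congr 1
      rw [div_eq_iff hyp.ne', ← Real.rpow_add hy0]
      norm_num
    · have hnum : ‖Complex.exp (-(Complex.I * (k:ℂ) * (y:ℂ))) - 1‖ ≤ 2 := by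
        calc ‖Complex.exp (-(Complex.I * (k:ℂ) * (y:ℂ))) - 1‖
            ≤ ‖Complex.exp (-(Complex.I * (k:ℂ) * (y:ℂ)))‖ + ‖(1:ℂ)‖ := norm_sub_le _ _
          _ ≤ 2 := by
              rw [Complex.norm_exp]
              simp
              norm_num
      have : ‖Complex.exp (-(Complex.I * (k:ℂ) * (y:ℂ))) - 1‖
          / (y ^ ((3:ℝ)/2) + a ^ ((3:ℝ)/2)) ≤ 2 / y ^ ((3:ℝ)/2) :=
        div_le_div₀ (by norm_num) hnum hyp hdle
      refine this.trans (le_of_eq ?_)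
      rw [hhdef]; simp only [if_neg hyT]
      rw [div_eq_mul_inv, ← Real.rpow_neg_one (y ^ ((3:ℝ)/2)), ← Real.rpow_mul hy0.le]
      norm_num
  calc ‖∫ y in Set.Ioi (0:ℝ),
          (Complex.exp (-(Complex.I * (k:ℂ) * (y:ℂ))) - 1)
            / ((y ^ ((3:ℝ)/2) + a ^ ((3:ℝ)/2) : ℝ) : ℂ)‖
      ≤ ∫ y in Set.Ioi (0:ℝ), ‖(Complex.exp (-(Complex.I * (k:ℂ) * (y:ℂ))) - 1)
            / ((y ^ ((3:ℝ)/2) + a ^ ((3:ℝ)/2) : ℝ) : ℂ)‖ :=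
        norm_integral_le_integral_norm _
    _ ≤ ∫ y in Set.Ioi (0:ℝ), h y := by
        refine integral_mono_of_nonneg (Filter.Eventually.of_forall fun y => norm_nonneg _)
          hhInt ?_
        rw [Filter.EventuallyLE, ae_restrict_iff' measurableSet_Ioi]
        exact Filter.Eventually.of_forall hbound
    _ = 8 * K ^ ((1:ℝ)/2) := htot
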